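/- Let n ≥ 1. The relation σ on the twisted partition monoid P_n^Φ consisting of all pairs ((i,α),(i,α)) together with all pairs ((i,α),(j,β)) with i,j ∈ ℕ, α,β ∈ I_1, α̂ = β̂ and rank α − rank β = i − j (as integers), is a congruence on P_n^Φ. -/

import Mathlib

namespace TPM

/-- Vertex set `{1,…,n} ∪ {1',…,n'}`: `Sum.inl` = unprimed (upper row),
`Sum.inr` = primed (lower row). -/
abbrev V (n : ℕ) := Fin n ⊕ Fin n

/-- The partition monoid `P_n`: set partitions of the `2n`-element set `V n`,
encoded as equivalence relations (setoids). -/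
abbrev PM (n : ℕ) := Setoid (V n)

/-- Three-row vertex set of the product graph: top / middle / bottom. -/
abbrev W (n : ℕ) := Fin n ⊕ (Fin n ⊕ Fin n)

variable {n : ℕ}

/-- First factor: unprimed ↦ top, primed ↦ middle. -/
def topMid : V n → W n
  | Sum.inl i => Sum.inl i
  | Sum.inr i => Sum.inr (Sum.inl i)

/-- Second factor: unprimed ↦ middle, primed ↦ bottom. -/
def midBot : V n → W n
  | Sum.inl i => Sum.inr (Sum.inl i)
  | Sum.inr i => Sum.inr (Sum.inr i)

/-- Embedding of `V n` as top and bottom rows of the three-row set. -/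
def topBot : V n → W n
  | Sum.inl i => Sum.inl i
  | Sum.inr i => Sum.inr (Sum.inr i)

/-- Edge relation of the product graph `Γ(α,β)`. -/
def graphRel (α β : PM n) (x y : W n) : Prop :=
  (∃ u v : V n, α.r u v ∧ x = topMid u ∧ y = topMid v) ∨
  (∃ u v : V n, β.r u v ∧ x = midBot u ∧ y = midBot v)

/-- Connectivity (equivalence closure of the edge relation) in `Γ(α,β)`. -/
def conn (α β : PM n) : W n → W n → Prop := Relation.EqvGen (graphRel α β)

/-- Connectivity in `Γ(α,β)`, as a setoid on the three-row vertex set. -/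
def connSetoid (α β : PM n) : Setoid (W n) :=
  ⟨conn α β, Relation.EqvGen.is_equivalence _⟩

/-- The product of two partitions: `x,y` lie in the same block of `αβ` iff they are
connected in `Γ(α,β)`. -/
def pmul (α β : PM n) : PM n :=
  ⟨fun x y => conn α β (topBot x) (topBot y),
    ⟨fun _ => Relation.EqvGen.refl _, fun h => Relation.EqvGen.symm _ _ h, fun h h' => Relation.EqvGen.trans _ _ _ h h'⟩⟩

/-- A vertex of the three-row set lies in the middle row. -/
def isMid (x : W n) : Prop := ∃ i : Fin n, x = Sum.inr (Sum.inl i)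

/-- `Φ(α,β)`: the number of floating components of `Γ(α,β)`, i.e. connected components
all of whose vertices lie in the middle row. -/
noncomputable def Phi (α β : PM n) : ℕ :=
  Nat.card {c : Quotient (connSetoid α β) //
    ∀ x : W n, Quotient.mk (connSetoid α β) x = c → isMid x}

/-- The rank of a partition: the number of transversal blocks (blocks containing both an
unprimed and a primed element). -/
noncomputable def rnk (α : PM n) : ℕ :=
  Nat.card {c : Quotient α //
    (∃ i : Fin n, Quotient.mk α (Sum.inl i) = c) ∧ ∃ i : Fin n, Quotient.mk α (Sum.inr i) = c}

/-- Which row of `V n` a point lies in. -/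
def side : V n → Bool
  | Sum.inl _ => true
  | Sum.inr _ => false

/-- `α̂`: split each transversal of `α` into its unprimed part and its primed part. -/
def hat (α : PM n) : PM n :=
  ⟨fun x y => α.r x y ∧ side x = side y,
    ⟨fun x => ⟨α.iseqv.refl x, rfl⟩,
     fun h => ⟨α.iseqv.symm h.1, h.2.symm⟩,
     fun h h' => ⟨α.iseqv.trans h.1 h'.1, h.2.trans h'.2⟩⟩⟩

/-- The twisted product on `ℕ × P_n`:  `(i,α)(j,β) = (i + j + Φ(α,β), αβ)`. -/
noncomputable def tmul (a b : ℕ × PM n) : ℕ × PM n :=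
  (a.1 + b.1 + Phi a.2 b.2, pmul a.2 b.2)

/-- A congruence on a set equipped with a binary operation: an equivalence relation
compatible with the operation on both sides. -/
def IsCongruence {M : Type*} (mul : M → M → M) (σ : M → M → Prop) : Prop :=
  Equivalence σ ∧ ∀ x y a, σ x y → σ (mul a x) (mul a y) ∧ σ (mul x a) (mul y a)

/-- Green's relation `R`: equality of the right ideals `xM = yM`. -/
def greenR {M : Type*} (mul : M → M → M) (x y : M) : Prop :=
  Set.range (mul x) = Set.range (mul y)

/-- Green's relation `L`: `Mx = My`. -/
def greenL {M : Type*} (mul : M → M → M) (x y : M) : Prop :=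
  Set.range (fun a => mul a x) = Set.range (fun a => mul a y)

/-- The principal two-sided ideal `MxM`. -/
def jSet {M : Type*} (mul : M → M → M) (x : M) : Set M :=
  Set.range (fun p : M × M => mul (mul p.1 x) p.2)

/-- Green's relation `J`: `MxM = MyM`. -/
def greenJ {M : Type*} (mul : M → M → M) (x y : M) : Prop :=
  jSet mul x = jSet mul y

/-- Green's relation `H = R ∩ L`. -/
def greenH {M : Type*} (mul : M → M → M) (x y : M) : Prop :=
  greenR mul x y ∧ greenL mul x y

/-- Green's relation `D = R ∘ L`. -/
def greenD {M : Type*} (mul : M → M → M) (x y : M) : Prop :=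
  ∃ z, greenR mul x z ∧ greenL mul z y

/-- `pd(α,β)` satisfies `P`, where `α` has `p` transversals: there are representatives
`a s` of the upper parts of the `p` (pairwise distinct) transversals of `α`, with `b s`
representing the corresponding lower parts, and a permutation `π` with `P π` such that the
block of `β` containing `a s` contains `b (π s)`.  (For H-related `α, β ∈ D_p` this says
exactly that some representation of the permutational difference `pd(α,β)` satisfies `P`.) -/
def pdIn (p : ℕ) (P : Equiv.Perm (Fin p) → Prop) (α β : PM n) : Prop :=
  ∃ (a b : Fin p → Fin n) (π : Equiv.Perm (Fin p)),
    (∀ s t, α.r (Sum.inl (a s)) (Sum.inl (a t)) → s = t) ∧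
    (∀ s, α.r (Sum.inl (a s)) (Sum.inr (b s))) ∧
    (∀ s, β.r (Sum.inl (a s)) (Sum.inr (b (π s)))) ∧
    P π

/-- The relation `ν_N` on `D_p`, for a subgroup `N ≤ S_p`:  H-related pairs of rank-`p`
partitions whose permutational difference lies in `N`. -/
def nuRel (p : ℕ) (N : Subgroup (Equiv.Perm (Fin p))) (α β : PM n) : Prop :=
  rnk α = p ∧ rnk β = p ∧ greenH pmul α β ∧ pdIn p (· ∈ N) α β

/-- The congruence `(m, m+d)^♯` on the additive monoid `ℕ` (intended for `d ≥ 1`). -/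
def natCong (m d : ℕ) (i j : ℕ) : Prop :=
  i = j ∨ (m ≤ i ∧ m ≤ j ∧ i % d = j % d)

/-- `min θ ≤ i` for a congruence `θ` on `ℕ` (with `min Δ_ℕ = ∞`). -/
def minLE (θ : ℕ → ℕ → Prop) (i : ℕ) : Prop :=
  ∃ a b, θ a b ∧ a ≠ b ∧ a ≤ i

/-- `k ≤ min θ` for a congruence `θ` on `ℕ` (with `min Δ_ℕ = ∞`). -/
def leMin (k : ℕ) (θ : ℕ → ℕ → Prop) : Prop :=
  ∀ a b, θ a b → a ≠ b → k ≤ a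

/-- The possible entries of a C-matrix. -/
inductive CEntry : Type
  | delta | muUp | muDown | mu | lam | rho | R
  | nsym (q : ℕ) (N : Subgroup (Equiv.Perm (Fin q)))

/-- Whether a C-matrix entry is an N-symbol. -/
def isNsym : CEntry → Prop
  | CEntry.nsym _ _ => True
  | _ => False

/-- The allowed values of the symbol `ζ` in row types RT2, RT5, RT6. -/
def isZeta (e : CEntry) : Prop :=
  e = CEntry.mu ∨ e = CEntry.muUp ∨ e = CEntry.muDown ∨ e = CEntry.delta

/-- The allowed values of the symbol `ξ` in row types RT4–RT7: any of `μ,ρ,λ,R` if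
`d = 1`, and only `μ` if `d > 1`. -/
def xiOK (d : ℕ) (e : CEntry) : Prop :=
  e = CEntry.mu ∨ (d = 1 ∧ (e = CEntry.rho ∨ e = CEntry.lam ∨ e = CEntry.R))

/-- Row type RT1 for rows 0 and 1: all entries `Δ`. -/
def RT1 (M0 M1 : ℕ → CEntry) : Prop :=
  (∀ i, M0 i = CEntry.delta) ∧ (∀ i, M1 i = CEntry.delta)

/-- Row type RT2. -/
def RT2 (Θ0 Θ1 : ℕ → ℕ → Prop) (M0 M1 : ℕ → CEntry) : Prop :=
  Θ0 = Eq ∧ Θ1 = Eq ∧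
  ∃ i ζ, isZeta ζ ∧
    (∀ j, j < i → M0 j = CEntry.delta) ∧ (∀ j, i ≤ j → M0 j = CEntry.mu) ∧
    (∀ j, j < i → M1 j = CEntry.delta) ∧ M1 i = ζ ∧ (∀ j, i < j → M1 j = CEntry.mu)

/-- Row type RT3. -/
def RT3 (Θ0 : ℕ → ℕ → Prop) (M0 M1 : ℕ → CEntry) : Prop :=
  ∃ m ξ, Θ0 = natCong m 1 ∧ (ξ = CEntry.rho ∨ ξ = CEntry.lam ∨ ξ = CEntry.R) ∧
    (∀ i, M1 i = CEntry.delta) ∧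
    (∀ j, j < m → M0 j = CEntry.delta) ∧ (∀ j, m ≤ j → M0 j = ξ)

/-- Row type RT4. -/
def RT4 (Θ0 Θ1 : ℕ → ℕ → Prop) (M0 M1 : ℕ → CEntry) : Prop :=
  ∃ m d ξ, 1 ≤ d ∧ Θ0 = natCong m d ∧ Θ1 = natCong m d ∧ xiOK d ξ ∧
    (∀ j, j < m → M0 j = CEntry.delta ∧ M1 j = CEntry.delta) ∧
    (∀ j, m ≤ j → M0 j = ξ ∧ M1 j = ξ)

/-- Row type RT5. -/
def RT5 (Θ0 Θ1 : ℕ → ℕ → Prop) (M0 M1 : ℕ → CEntry) : Prop :=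
  ∃ m d i ξ ζ, 1 ≤ d ∧ i < m ∧ Θ0 = natCong m d ∧ Θ1 = natCong (m + 1) d ∧
    xiOK d ξ ∧ isZeta ζ ∧
    (∀ j, j < i → M0 j = CEntry.delta) ∧ (∀ j, i ≤ j → j < m → M0 j = CEntry.mu) ∧
    (∀ j, m ≤ j → M0 j = ξ) ∧
    (∀ j, j < i → M1 j = CEntry.delta) ∧ M1 i = ζ ∧
    (∀ j, i < j → j ≤ m → M1 j = CEntry.mu) ∧ (∀ j, m < j → M1 j = ξ)

/-- Row type RT6. -/
def RT6 (Θ0 Θ1 : ℕ → ℕ → Prop) (M0 M1 : ℕ → CEntry) : Prop :=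
  ∃ m l d ξ ζ, 1 ≤ d ∧ m < l ∧ Θ0 = natCong m d ∧ Θ1 = natCong l d ∧
    xiOK d ξ ∧ isZeta ζ ∧
    (∀ j, j < m → M0 j = CEntry.delta) ∧ (∀ j, m ≤ j → M0 j = ξ) ∧
    (∀ j, j < l - 1 → M1 j = CEntry.delta) ∧ M1 (l - 1) = ζ ∧ (∀ j, l ≤ j → M1 j = ξ)

/-- Row type RT7. -/
def RT7 (Θ0 Θ1 : ℕ → ℕ → Prop) (M0 M1 : ℕ → CEntry) : Prop :=
  ∃ m l d ξ, 1 ≤ d ∧ 0 < m ∧ m + 1 < l ∧ (l - 1) % d = m % d ∧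
    Θ0 = natCong m d ∧ Θ1 = natCong l d ∧ xiOK d ξ ∧
    (∀ j, j < m - 1 → M0 j = CEntry.delta) ∧ M0 (m - 1) = CEntry.mu ∧
    (∀ j, m ≤ j → M0 j = ξ) ∧
    (∀ j, j < l - 1 → M1 j = CEntry.delta) ∧ M1 (l - 1) = CEntry.mu ∧
    (∀ j, l ≤ j → M1 j = ξ)

/-- Row type RT8 for a row `q ≥ 2`: all entries `Δ`. -/
def RT8 (Mq : ℕ → CEntry) : Prop := ∀ i, Mq i = CEntry.delta

/-- Row type RT9 for a row `q ≥ 2`. -/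
def RT9 (q : ℕ) (Θq : ℕ → ℕ → Prop) (Mq : ℕ → CEntry) : Prop :=
  ∃ (i k : ℕ) (Ns : ℕ → Subgroup (Equiv.Perm (Fin q))),
    i ≤ k ∧ leMin k Θq ∧
    (∀ j, i ≤ j → j ≤ k → Ns j ≠ ⊥ ∧ (Ns j).Normal) ∧
    (∀ j j', i ≤ j → j ≤ j' → j' ≤ k → Ns j ≤ Ns j') ∧
    (∀ j, j < i → Mq j = CEntry.delta) ∧
    (∀ j, i ≤ j → j < k → Mq j = CEntry.nsym q (Ns j)) ∧
    (∀ j, k ≤ j → Mq j = CEntry.nsym q (Ns k))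

/-- Row type RT10 for a row `q ≥ 2`. -/
def RT10 (q : ℕ) (Θq : ℕ → ℕ → Prop) (Mq : ℕ → CEntry) : Prop :=
  ∃ (i m : ℕ) (Ns : ℕ → Subgroup (Equiv.Perm (Fin q))),
    i ≤ m ∧ Θq = natCong m 1 ∧
    (∀ j, i ≤ j → j < m → Ns j ≠ ⊥ ∧ (Ns j).Normal) ∧
    (∀ j j', i ≤ j → j ≤ j' → j' < m → Ns j ≤ Ns j') ∧
    (∀ j, j < i → Mq j = CEntry.delta) ∧
    (∀ j, i ≤ j → j < m → Mq j = CEntry.nsym q (Ns j)) ∧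
    (∀ j, m ≤ j → Mq j = CEntry.R)

/-- A C-pair for `P_n^Φ`: a descending chain `Θ = (θ_0 ⊇ ⋯ ⊇ θ_n)` of congruences on
`(ℕ,+)` together with a matrix `M = (M_{qi})`, `0 ≤ q ≤ n`, `i ∈ ℕ`, whose rows 0 and 1
jointly have one of the types RT1–RT7, whose rows `q ≥ 2` have one of the types RT8–RT10,
and which satisfies the verticality conditions (V1) and (V2). -/
def IsCPair (n : ℕ) (Θ : ℕ → ℕ → ℕ → Prop) (M : ℕ → ℕ → CEntry) : Prop :=
  (∀ q, q ≤ n → IsCongruence (· + ·) (Θ q)) ∧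
  (∀ q r, q ≤ r → r ≤ n → ∀ i j, Θ r i j → Θ q i j) ∧
  (RT1 (M 0) (M 1) ∨ RT2 (Θ 0) (Θ 1) (M 0) (M 1) ∨ RT3 (Θ 0) (M 0) (M 1) ∨
    RT4 (Θ 0) (Θ 1) (M 0) (M 1) ∨ RT5 (Θ 0) (Θ 1) (M 0) (M 1) ∨
    RT6 (Θ 0) (Θ 1) (M 0) (M 1) ∨ RT7 (Θ 0) (Θ 1) (M 0) (M 1)) ∧
  (∀ q, 2 ≤ q → q ≤ n → (RT8 (M q) ∨ RT9 q (Θ q) (M q) ∨ RT10 q (Θ q) (M q))) ∧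
  (∀ q i, 1 ≤ q → q ≤ n → isNsym (M q i) →
    ¬(M (q - 1) i = CEntry.delta ∨ M (q - 1) i = CEntry.muUp ∨
      M (q - 1) i = CEntry.muDown ∨ isNsym (M (q - 1) i))) ∧
  (∀ q i, 2 ≤ q → q ≤ n → M q i = CEntry.R → M (q - 1) i = CEntry.R)

/-- The relation `cg(Θ,M)` on `P_n^Φ` associated with a C-pair `(Θ,M)`: conditions
(C1)–(C8). -/
def cg (n : ℕ) (Θ : ℕ → ℕ → ℕ → Prop) (M : ℕ → ℕ → CEntry)
    (a b : ℕ × PM n) : Prop :=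
  -- (C1)
  (M (rnk a.2) a.1 = CEntry.delta ∧ M (rnk b.2) b.1 = CEntry.delta ∧
    Θ (rnk a.2) a.1 b.1 ∧ a.2 = b.2) ∨
  -- (C2)
  (M (rnk a.2) a.1 = CEntry.R ∧ M (rnk b.2) b.1 = CEntry.R) ∨
  -- (C3)
  (∃ p N, M (rnk a.2) a.1 = CEntry.nsym p N ∧ M (rnk b.2) b.1 = CEntry.nsym p N ∧
    Θ (rnk a.2) a.1 b.1 ∧ rnk a.2 = p ∧ greenH pmul a.2 b.2 ∧ pdIn p (· ∈ N) a.2 b.2) ∨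
  -- (C4)
  (M (rnk a.2) a.1 = CEntry.lam ∧ M (rnk b.2) b.1 = CEntry.lam ∧
    greenL pmul (hat a.2) (hat b.2)) ∨
  -- (C5)
  (M (rnk a.2) a.1 = CEntry.rho ∧ M (rnk b.2) b.1 = CEntry.rho ∧
    greenR pmul (hat a.2) (hat b.2)) ∨
  -- (C6)
  (M (rnk a.2) a.1 = CEntry.muDown ∧ M (rnk b.2) b.1 = CEntry.muDown ∧
    hat a.2 = hat b.2 ∧ greenL pmul a.2 b.2) ∨
  -- (C7)
  (M (rnk a.2) a.1 = CEntry.muUp ∧ M (rnk b.2) b.1 = CEntry.muUp ∧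
    hat a.2 = hat b.2 ∧ greenR pmul a.2 b.2) ∨
  -- (C8)
  (M (rnk a.2) a.1 = CEntry.mu ∧ M (rnk b.2) b.1 = CEntry.mu ∧
    hat a.2 = hat b.2 ∧
    ((rnk a.2 = rnk b.2 ∧ Θ (rnk a.2) a.1 b.1) ∨
     (rnk a.2 ≠ rnk b.2 ∧ Θ 0 (a.1 + rnk b.2) (b.1 + rnk a.2) ∧
        ¬ minLE (Θ (rnk a.2)) a.1 ∧ ¬ minLE (Θ (rnk b.2)) b.1) ∨
     (rnk a.2 ≠ rnk b.2 ∧ Θ 0 (a.1 + rnk b.2) (b.1 + rnk a.2) ∧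
        minLE (Θ (rnk a.2)) a.1 ∧ minLE (Θ (rnk b.2)) b.1)))

/-- The C-pair `(Θ,M)` is exceptional with exceptional row `q`, where
`θ_q = (m, m+2d)^♯`. -/
def ExcAt (n : ℕ) (Θ : ℕ → ℕ → ℕ → Prop) (M : ℕ → ℕ → CEntry) (q m d : ℕ) : Prop :=
  2 ≤ q ∧ q ≤ n ∧ 1 ≤ d ∧ Θ q = natCong m (2 * d) ∧
  ((2 < q ∧ M q m = CEntry.nsym q (alternatingGroup (Fin q))) ∨
   (q = 2 ∧ M 2 m = CEntry.delta ∧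
     (M 1 m = CEntry.mu ∨ M 1 m = CEntry.rho ∨ M 1 m = CEntry.lam ∨ M 1 m = CEntry.R) ∧
     (∀ i j, natCong m d i j → Θ 1 i j)))

/-- The exceptional congruence `cgx(Θ,M)` associated with an exceptional C-pair:
`cg(Θ,M)` together with the pairs of (C9). -/
def cgx (n : ℕ) (Θ : ℕ → ℕ → ℕ → Prop) (M : ℕ → ℕ → CEntry) (q m d : ℕ)
    (a b : ℕ × PM n) : Prop :=
  cg n Θ M a b ∨
  (rnk a.2 = q ∧ rnk b.2 = q ∧ natCong m d a.1 b.1 ∧ ¬ Θ q a.1 b.1 ∧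
    greenH pmul a.2 b.2 ∧ pdIn q (fun π => π ∉ alternatingGroup (Fin q)) a.2 b.2)

/-- The Rees relation of a subset `I`. -/
def rees {M : Type*} (I : Set M) (x y : M) : Prop := x = y ∨ (x ∈ I ∧ y ∈ I)

/-- A (possibly empty) ideal of `P_n^Φ`: `MIM ⊆ I`. -/
def tIdeal (n : ℕ) (I : Set (ℕ × PM n)) : Prop :=
  ∀ a b x, x ∈ I → tmul (tmul a x) b ∈ I

/-- `I(σ)`: the union of all ideals `I` of `P_n^Φ` whose Rees congruence is contained
in `σ`. -/
def Isig (n : ℕ) (σ : (ℕ × PM n) → (ℕ × PM n) → Prop) : Set (ℕ × PM n) :=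
  ⋃₀ {I | tIdeal n I ∧ ∀ x y, rees I x y → σ x y}

/-- The 0-twisted partition monoid `P_{n,0}^Φ`, carried by `Option (P_n)` with
`none` the zero element `✗`. -/
noncomputable def mul0 (a b : Option (PM n)) : Option (PM n) :=
  match a, b with
  | some α, some β => if Phi α β = 0 then some (pmul α β) else none
  | _, _ => none

/-- `rank a ≤ q`, where `rank ✗ = -∞`. -/
def rnkLE (a : Option (PM n)) (q : ℕ) : Prop :=
  ∀ α, a = some α → rnk α ≤ q

/-- The Rees congruence `R_q` on `P_{n,0}^Φ`. -/
def ReesQ (q : ℕ) (a b : Option (PM n)) : Prop :=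
  a = b ∨ (rnkLE a q ∧ rnkLE b q)

/-- Lift a relation on `P_n` to `P_{n,0}^Φ = P_n ∪ {✗}`. -/
def lift2 (r : PM n → PM n → Prop) (a b : Option (PM n)) : Prop :=
  ∃ α β, a = some α ∧ b = some β ∧ r α β


section CongruenceAux

open Relation Sum

variable {n : ℕ}

/-- A vertex lies in the bottom row. -/
def isBot (x : W n) : Prop := ∃ i : Fin n, x = Sum.inr (Sum.inr i)

lemma not_isMid_inl (i : Fin n) : ¬ isMid (Sum.inl i : W n) := by
  rintro ⟨j, h⟩; cases h

lemma not_isMid_bot (i : Fin n) : ¬ isMid (Sum.inr (Sum.inr i) : W n) := by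
  rintro ⟨j, h⟩; simp at h

lemma isBot_midBot (u : V n) : isBot (midBot u) ↔ side u = false := by
  cases u with
  | inl a => simp [midBot, isBot, side]
  | inr a => simpa [midBot, isBot, side] using ⟨a, rfl⟩

lemma not_isBot_topMid (u : V n) : ¬ isBot (topMid u) := by
  cases u <;> rintro ⟨j, h⟩ <;> simp [topMid] at h

lemma isBot_topBot (u : V n) : isBot (topBot u) ↔ side u = false := by
  cases u with
  | inl a => simp [topBot, isBot, side]
  | inr a => simpa [topBot, isBot, side] using ⟨a, rfl⟩

lemma conn_mono {γ α α' : PM n} (h : ∀ u v, α'.r u v → α.r u v) {x y : W n}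
    (hc : conn γ α' x y) : conn γ α x y := by
  refine Relation.EqvGen.mono ?_ _ _ hc
  rintro a b (⟨u, v, huv, rfl, rfl⟩ | ⟨u, v, huv, rfl, rfl⟩)
  · exact Or.inl ⟨u, v, huv, rfl, rfl⟩
  · exact Or.inr ⟨u, v, h _ _ huv, rfl, rfl⟩

lemma conn_closed {γ α : PM n} (P : W n → Prop)
    (hP : ∀ x y, graphRel γ α x y → (P x ↔ P y)) :
    ∀ {x y : W n}, conn γ α x y → (P x ↔ P y) := by
  intro x y h
  induction h with
  | rel a b h => exact hP _ _ h
  | refl a => exact Iff.rfl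
  | symm a b _ ih => exact ih.symm
  | trans a b c _ _ ih1 ih2 => exact ih1.trans ih2

lemma bot_closed {γ δ : PM n} (hδ : ∀ u v, δ.r u v → side u = side v) :
    ∀ {x y : W n}, conn γ δ x y → (isBot x ↔ isBot y) := by
  intro x y h
  refine conn_closed isBot ?_ h
  rintro a b (⟨u, v, huv, rfl, rfl⟩ | ⟨u, v, huv, rfl, rfl⟩)
  · simp [not_isBot_topMid]
  · rw [isBot_midBot, isBot_midBot, hδ _ _ huv]

lemma hat_le (α : PM n) : ∀ u v, (hat α).r u v → α.r u v := fun _ _ h => h.1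

lemma hat_no_cross (α : PM n) : ∀ u v, (hat α).r u v → side u = side v := fun _ _ h => h.2

lemma rnk_eq_zero_of_no_cross {α : PM n} (h : ∀ u v, α.r u v → side u = side v) :
    rnk α = 0 := by
  have he : IsEmpty {c : Quotient α //
      (∃ i : Fin n, Quotient.mk α (Sum.inl i) = c) ∧
      ∃ i : Fin n, Quotient.mk α (Sum.inr i) = c} := by
    constructor
    rintro ⟨c, ⟨i, hi⟩, ⟨j, hj⟩⟩
    have hr : α.r (Sum.inl i) (Sum.inr j) := Quotient.exact (hi.trans hj.symm)
    simpa [side] using h _ _ hr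
  exact Nat.card_of_isEmpty

lemma trans_class {α : PM n} {u v : V n} (huv : α.r u v) (hs : side u ≠ side v) :
    (∃ i : Fin n, Quotient.mk α (Sum.inl i) = Quotient.mk α u) ∧
    (∃ i : Fin n, Quotient.mk α (Sum.inr i) = Quotient.mk α u) := by
  rcases u with a | a <;> rcases v with b | b <;> simp [side] at hs
  · exact ⟨⟨a, rfl⟩, ⟨b, Quotient.sound (α.iseqv.symm huv)⟩⟩
  · exact ⟨⟨b, Quotient.sound (α.iseqv.symm huv)⟩, ⟨a, rfl⟩⟩

lemma no_cross_of_rnk_eq_zero {α : PM n} (h : rnk α = 0) :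
    ∀ u v, α.r u v → side u = side v := by
  intro u v huv
  by_contra hs
  have hne : Nonempty {c : Quotient α //
      (∃ i : Fin n, Quotient.mk α (Sum.inl i) = c) ∧
      ∃ i : Fin n, Quotient.mk α (Sum.inr i) = c} :=
    ⟨⟨Quotient.mk α u, trans_class huv hs⟩⟩
  have := Nat.card_pos (α := {c : Quotient α //
      (∃ i : Fin n, Quotient.mk α (Sum.inl i) = c) ∧
      ∃ i : Fin n, Quotient.mk α (Sum.inr i) = c})
  rw [show Nat.card _ = rnk α from rfl, h] at this
  exact absurd this (by omega)

lemma hat_eq_self {α : PM n} (h : ∀ u v, α.r u v → side u = side v) : hat α = α := by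
  apply Setoid.ext
  intro x y
  exact ⟨fun hh => hh.1, fun hh => ⟨hh, h _ _ hh⟩⟩

lemma rnk_pmul_zero {γ δ : PM n} (hδ : ∀ u v, δ.r u v → side u = side v) :
    rnk (pmul γ δ) = 0 := by
  apply rnk_eq_zero_of_no_cross
  intro u v huv
  have h := bot_closed hδ huv
  rw [isBot_topBot, isBot_topBot] at h
  cases hu : side u <;> cases hv : side v <;> simp [hu, hv] at h ⊢

end CongruenceAux
section Rank1

open Relation Sum

variable {n : ℕ}

/-- `x` is connected in `Γ(γ, α̂)` to the middle/bottom image of the transversal `T`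
(the `α`-class of `t0`). -/
def touches (γ α : PM n) (t0 : V n) (x : W n) : Prop :=
  ∃ t, α.r t t0 ∧ conn γ (hat α) x (midBot t)

variable {γ α : PM n} {t0 : V n}

lemma conn_iff_struct (hOnly : ∀ u v, α.r u v → side u ≠ side v → α.r u t0) {x y : W n} :
    conn γ α x y ↔ (conn γ (hat α) x y ∨ (touches γ α t0 x ∧ touches γ α t0 y)) := by
  constructor
  · intro h
    induction h with
    | rel a b hab =>
      rcases hab with ⟨u, v, huv, rfl, rfl⟩ | ⟨u, v, huv, rfl, rfl⟩
      · exact Or.inl (EqvGen.rel _ _ (Or.inl ⟨u, v, huv, rfl, rfl⟩))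
      · by_cases hs : side u = side v
        · exact Or.inl (EqvGen.rel _ _ (Or.inr ⟨u, v, ⟨huv, hs⟩, rfl, rfl⟩))
        · exact Or.inr ⟨⟨u, hOnly u v huv hs, EqvGen.refl _⟩,
            ⟨v, hOnly v u (α.iseqv.symm huv) (Ne.symm hs), EqvGen.refl _⟩⟩
    | refl a => exact Or.inl (EqvGen.refl _)
    | symm a b _ ih =>
      rcases ih with h | ⟨h1, h2⟩
      · exact Or.inl (EqvGen.symm _ _ h)
      · exact Or.inr ⟨h2, h1⟩
    | trans a b c _ _ ih1 ih2 =>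
      rcases ih1 with h1 | ⟨t1, t1'⟩ <;> rcases ih2 with h2 | ⟨t2, t2'⟩
      · exact Or.inl (EqvGen.trans _ _ _ h1 h2)
      · obtain ⟨t, ht, hc⟩ := t2
        exact Or.inr ⟨⟨t, ht, EqvGen.trans _ _ _ h1 hc⟩, t2'⟩
      · obtain ⟨t, ht, hc⟩ := t1'
        exact Or.inr ⟨t1, ⟨t, ht, EqvGen.trans _ _ _ (EqvGen.symm _ _ h2) hc⟩⟩
      · exact Or.inr ⟨t1, t2'⟩
  · rintro (h | ⟨⟨t, ht, hxt⟩, ⟨t', ht', hyt⟩⟩)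
    · exact conn_mono (hat_le α) h
    · have h1 : conn γ α x (midBot t) := conn_mono (hat_le α) hxt
      have h2 : conn γ α y (midBot t') := conn_mono (hat_le α) hyt
      have h3 : conn γ α (midBot t) (midBot t') :=
        EqvGen.rel _ _ (Or.inr ⟨t, t', α.iseqv.trans ht (α.iseqv.symm ht'), rfl, rfl⟩)
      exact EqvGen.trans _ _ _ h1 (EqvGen.trans _ _ _ h3 (EqvGen.symm _ _ h2))

variable {a0 b0 : Fin n}

lemma touches_cases (ha0 : α.r (Sum.inl a0) t0) {x : W n} (h : touches γ α t0 x) :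
    conn γ (hat α) x (Sum.inr (Sum.inl a0)) ∨
    ∃ b, α.r (Sum.inr b) t0 ∧ conn γ (hat α) x (Sum.inr (Sum.inr b)) := by
  obtain ⟨t, ht, hxt⟩ := h
  cases t with
  | inl a =>
    left
    refine EqvGen.trans _ _ _ hxt (EqvGen.rel _ _ (Or.inr ⟨Sum.inl a, Sum.inl a0,
      ⟨α.iseqv.trans ht (α.iseqv.symm ha0), rfl⟩, rfl, rfl⟩))
  | inr b => exact Or.inr ⟨b, ht, hxt⟩

lemma top_touch_to_D (ha0 : α.r (Sum.inl a0) t0) {i : Fin n}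
    (h : touches γ α t0 (Sum.inl i)) :
    conn γ (hat α) (Sum.inl i) (Sum.inr (Sum.inl a0)) := by
  rcases touches_cases ha0 h with h | ⟨b, _, hxb⟩
  · exact h
  · have := bot_closed (hat_no_cross α) hxb
    simp [isBot] at this

lemma touch_float'_to_D (ha0 : α.r (Sum.inl a0) t0) {x : W n}
    (hfl : ∀ y, conn γ (hat α) y x → isMid y) (h : touches γ α t0 x) :
    conn γ (hat α) x (Sum.inr (Sum.inl a0)) := by
  rcases touches_cases ha0 h with h | ⟨b, _, hxb⟩
  · exact h
  · have := hfl _ (EqvGen.symm _ _ hxb)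
    simp [isMid] at this

lemma touch_of_trans (hOnly : ∀ u v, α.r u v → side u ≠ side v → α.r u t0)
    {i j : Fin n} (h : (pmul γ α).r (Sum.inl i) (Sum.inr j)) :
    touches γ α t0 (Sum.inl i) ∧ touches γ α t0 (Sum.inr (Sum.inr j)) := by
  have h' : conn γ α (Sum.inl i) (Sum.inr (Sum.inr j)) := h
  rw [conn_iff_struct hOnly] at h'
  rcases h' with h' | h'
  · have := bot_closed (hat_no_cross α) h'
    simp [isBot] at this
  · exact h'

lemma hat_pmul_eq (hOnly : ∀ u v, α.r u v → side u ≠ side v → α.r u t0)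
    (ha0 : α.r (Sum.inl a0) t0) :
    hat (pmul γ α) = hat (pmul γ (hat α)) := by
  apply Setoid.ext
  intro x y
  constructor
  · rintro ⟨h, hs⟩
    refine ⟨?_, hs⟩
    have h' : conn γ α (topBot x) (topBot y) := h
    rw [conn_iff_struct hOnly] at h'
    rcases h' with h' | ⟨hx, hy⟩
    · exact h'
    · rcases x with i | i <;> rcases y with i' | i' <;> simp [side] at hs
      · -- both top
        have d1 := top_touch_to_D ha0 hx
        have d2 := top_touch_to_D ha0 hy
        exact EqvGen.trans _ _ _ d1 (EqvGen.symm _ _ d2)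
      · -- both bottom
        rcases touches_cases ha0 hx with hx' | ⟨b, hb, hxb⟩
        · have := bot_closed (hat_no_cross α) hx'
          simp [isBot, topBot] at this
        rcases touches_cases ha0 hy with hy' | ⟨b', hb', hyb⟩
        · have := bot_closed (hat_no_cross α) hy'
          simp [isBot, topBot] at this
        have hmid : conn γ (hat α) (Sum.inr (Sum.inr b) : W n) (Sum.inr (Sum.inr b')) :=
          EqvGen.rel _ _ (Or.inr ⟨Sum.inr b, Sum.inr b',
            ⟨α.iseqv.trans hb (α.iseqv.symm hb'), rfl⟩, rfl, rfl⟩)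
        exact EqvGen.trans _ _ _ hxb (EqvGen.trans _ _ _ hmid (EqvGen.symm _ _ hyb))
  · rintro ⟨h, hs⟩
    exact ⟨conn_mono (hat_le α) h, hs⟩

end Rank1
section Rank1Count

open Relation Sum

variable {n : ℕ} {γ α : PM n} {t0 : V n} {a0 b0 : Fin n}

/-- The canonical map from blocks of `Γ(γ,α̂)` to blocks of `Γ(γ,α)`. -/
def Fmap (γ α : PM n) : Quotient (connSetoid γ (hat α)) → Quotient (connSetoid γ α) :=
  Quotient.lift (Quotient.mk (connSetoid γ α))
    (fun _ _ h => Quotient.sound (conn_mono (hat_le α) h))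

lemma float'_of_float {c : Quotient (connSetoid γ α)}
    (hc : ∀ x : W n, Quotient.mk (connSetoid γ α) x = c → isMid x) (x : W n)
    (hx : Quotient.mk (connSetoid γ α) x = c) :
    ∀ y : W n, Quotient.mk (connSetoid γ (hat α)) y =
        Quotient.mk (connSetoid γ (hat α)) x → isMid y := by
  intro y hy
  have h : conn γ (hat α) y x := Quotient.exact hy
  exact hc y ((Quotient.sound (conn_mono (hat_le α) h)).trans hx)

lemma rnk_pmul_eq_one (hOnly : ∀ u v, α.r u v → side u ≠ side v → α.r u t0)
    (ha0 : α.r (Sum.inl a0) t0) (hb0 : α.r (Sum.inr b0) t0)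
    (hTop : ∃ i : Fin n, conn γ (hat α) (Sum.inl i) (Sum.inr (Sum.inl a0))) :
    rnk (pmul γ α) = 1 := by
  obtain ⟨i0, hi0⟩ := hTop
  refine Nat.card_eq_one_iff_unique.mpr ⟨?_, ?_⟩
  · constructor
    rintro ⟨c1, ⟨i1, hi1⟩, ⟨j1, hj1⟩⟩ ⟨c2, ⟨i2, hi2⟩, ⟨j2, hj2⟩⟩
    have h1 : (pmul γ α).r (Sum.inl i1) (Sum.inr j1) := Quotient.exact (hi1.trans hj1.symm)
    have h2 : (pmul γ α).r (Sum.inl i2) (Sum.inr j2) := Quotient.exact (hi2.trans hj2.symm)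
    have d1 := top_touch_to_D ha0 (touch_of_trans hOnly h1).1
    have d2 := top_touch_to_D ha0 (touch_of_trans hOnly h2).1
    have : conn γ α (Sum.inl i1) (Sum.inl i2) :=
      conn_mono (hat_le α) (EqvGen.trans _ _ _ d1 (EqvGen.symm _ _ d2))
    have hc : (pmul γ α).r (Sum.inl i1) (Sum.inl i2) := this
    apply Subtype.ext
    show c1 = c2
    rw [← hi1, ← hi2]
    exact Quotient.sound hc
  · refine ⟨⟨Quotient.mk (pmul γ α) (Sum.inl i0), ⟨i0, rfl⟩, ⟨b0, ?_⟩⟩⟩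
    apply Quotient.sound
    show conn γ α (topBot (Sum.inr b0)) (topBot (Sum.inl i0))
    rw [conn_iff_struct hOnly]
    exact Or.inr ⟨⟨Sum.inr b0, hb0, EqvGen.refl _⟩, ⟨Sum.inl a0, ha0, hi0⟩⟩

lemma rnk_pmul_eq_zero' (hOnly : ∀ u v, α.r u v → side u ≠ side v → α.r u t0)
    (ha0 : α.r (Sum.inl a0) t0)
    (hTop : ¬ ∃ i : Fin n, conn γ (hat α) (Sum.inl i) (Sum.inr (Sum.inl a0))) :
    rnk (pmul γ α) = 0 := by
  have he : IsEmpty {c : Quotient (pmul γ α) //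
      (∃ i : Fin n, Quotient.mk (pmul γ α) (Sum.inl i) = c) ∧
      ∃ i : Fin n, Quotient.mk (pmul γ α) (Sum.inr i) = c} := by
    constructor
    rintro ⟨c, ⟨i, hi⟩, ⟨j, hj⟩⟩
    have h : (pmul γ α).r (Sum.inl i) (Sum.inr j) := Quotient.exact (hi.trans hj.symm)
    exact hTop ⟨i, top_touch_to_D ha0 (touch_of_trans hOnly h).1⟩
  exact Nat.card_of_isEmpty

lemma Phi_eq_of_top (hOnly : ∀ u v, α.r u v → side u ≠ side v → α.r u t0)
    (ha0 : α.r (Sum.inl a0) t0)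
    (hTop : ∃ i : Fin n, conn γ (hat α) (Sum.inl i) (Sum.inr (Sum.inl a0))) :
    Phi γ (hat α) = Phi γ α := by
  obtain ⟨i0, hi0⟩ := hTop
  -- no floating fine class touches T
  have key : ∀ x : W n,
      (∀ y : W n, Quotient.mk (connSetoid γ (hat α)) y =
        Quotient.mk (connSetoid γ (hat α)) x → isMid y) → ¬ touches γ α t0 x := by
    intro x hfl ht
    have hD := touch_float'_to_D ha0 (fun y hy => hfl y (Quotient.sound hy)) ht
    have : isMid (Sum.inl i0 : W n) :=
      hfl _ (Quotient.sound (EqvGen.trans _ _ _ hi0 (EqvGen.symm _ _ hD)))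
    exact not_isMid_inl i0 this
  have wd : ∀ c' : Quotient (connSetoid γ (hat α)),
      (∀ x : W n, Quotient.mk (connSetoid γ (hat α)) x = c' → isMid x) →
      (∀ x : W n, Quotient.mk (connSetoid γ α) x = Fmap γ α c' → isMid x) := by
    intro c'
    induction c' using Quotient.inductionOn with
    | h x =>
      intro h y hy
      have hyx : conn γ α y x := Quotient.exact hy
      rw [conn_iff_struct hOnly] at hyx
      rcases hyx with hc | ⟨_, hx⟩
      · exact h y (Quotient.sound hc)
      · exact absurd hx (key x (fun z hz => h z hz))
  refine Nat.card_eq_of_bijective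
    (fun c' => ⟨Fmap γ α c'.1, wd c'.1 c'.2⟩) ⟨?_, ?_⟩
  · rintro ⟨c1, h1⟩ ⟨c2, h2⟩ h
    have h' : Fmap γ α c1 = Fmap γ α c2 := congrArg Subtype.val h
    clear h
    obtain ⟨x, rfl⟩ := Quotient.exists_rep c1
    obtain ⟨y, rfl⟩ := Quotient.exists_rep c2
    have h'' : Quotient.mk (connSetoid γ α) x = Quotient.mk (connSetoid γ α) y := h'
    have hxy : conn γ α x y := Quotient.exact h''
    rw [conn_iff_struct hOnly] at hxy
    apply Subtype.ext
    show Quotient.mk (connSetoid γ (hat α)) x = Quotient.mk (connSetoid γ (hat α)) y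
    rcases hxy with hc | ⟨hx, _⟩
    · exact Quotient.sound hc
    · exact absurd hx (key x h1)
  · rintro ⟨c, hc⟩
    obtain ⟨x, hx⟩ := Quotient.exists_rep c
    refine ⟨⟨Quotient.mk (connSetoid γ (hat α)) x, float'_of_float hc x hx⟩, ?_⟩
    exact Subtype.ext (show Quotient.mk (connSetoid γ α) x = c from hx)

lemma Phi_succ_of_noTop (hOnly : ∀ u v, α.r u v → side u ≠ side v → α.r u t0)
    (ha0 : α.r (Sum.inl a0) t0) (hb0 : α.r (Sum.inr b0) t0)
    (hTop : ¬ ∃ i : Fin n, conn γ (hat α) (Sum.inl i) (Sum.inr (Sum.inl a0))) :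
    Phi γ (hat α) = Phi γ α + 1 := by
  classical
  set w0 : W n := Sum.inr (Sum.inl a0) with hw0
  -- the fine class of w0 is floating
  have hD : ∀ x : W n, Quotient.mk (connSetoid γ (hat α)) x =
      Quotient.mk (connSetoid γ (hat α)) w0 → isMid x := by
    intro z hz
    have hc : conn γ (hat α) z w0 := Quotient.exact hz
    rcases z with i | z
    · exact absurd ⟨i, hc⟩ hTop
    rcases z with i | i
    · exact ⟨i, rfl⟩
    · have := bot_closed (hat_no_cross α) hc
      simp [isBot, hw0] at this
  -- floating fine classes other than D give floating coarse classes
  have wd : ∀ c' : Quotient (connSetoid γ (hat α)),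
      (∀ x : W n, Quotient.mk (connSetoid γ (hat α)) x = c' → isMid x) →
      c' ≠ Quotient.mk (connSetoid γ (hat α)) w0 →
      (∀ x : W n, Quotient.mk (connSetoid γ α) x = Fmap γ α c' → isMid x) := by
    intro c'
    induction c' using Quotient.inductionOn with
    | h x =>
      intro h hne y hy
      have hyx : conn γ α y x := Quotient.exact hy
      rw [conn_iff_struct hOnly] at hyx
      rcases hyx with hc | ⟨_, hx⟩
      · exact h y (Quotient.sound hc)
      · have hd : Quotient.mk (connSetoid γ (hat α)) x =
            Quotient.mk (connSetoid γ (hat α)) w0 :=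
          Quotient.sound (touch_float'_to_D ha0 (fun z hz => h z (Quotient.sound hz)) hx)
        exact absurd hd hne
  -- the bijection onto Option
  let H : {c' : Quotient (connSetoid γ (hat α)) //
      ∀ x : W n, Quotient.mk (connSetoid γ (hat α)) x = c' → isMid x} →
      Option {c : Quotient (connSetoid γ α) //
      ∀ x : W n, Quotient.mk (connSetoid γ α) x = c → isMid x} :=
    fun c' => if h : c'.1 = Quotient.mk (connSetoid γ (hat α)) w0 then none
      else some ⟨Fmap γ α c'.1, wd c'.1 c'.2 h⟩
  have hbij : Function.Bijective H := by
    constructor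
    · rintro ⟨c1, h1⟩ ⟨c2, h2⟩ h
      by_cases e1 : c1 = Quotient.mk (connSetoid γ (hat α)) w0 <;>
        by_cases e2 : c2 = Quotient.mk (connSetoid γ (hat α)) w0
      · exact Subtype.ext (e1.trans e2.symm)
      · simp only [H, dif_pos e1, dif_neg e2] at h; exact absurd h (by simp)
      · simp only [H, dif_pos e2, dif_neg e1] at h; exact absurd h (by simp)
      · simp only [H, dif_neg e1, dif_neg e2, Option.some.injEq] at h
        have h' : Fmap γ α c1 = Fmap γ α c2 := congrArg Subtype.val h
        clear h
        obtain ⟨x, rfl⟩ := Quotient.exists_rep c1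
        obtain ⟨y, rfl⟩ := Quotient.exists_rep c2
        have h'' : Quotient.mk (connSetoid γ α) x = Quotient.mk (connSetoid γ α) y := h'
        have hxy : conn γ α x y := Quotient.exact h''
        rw [conn_iff_struct hOnly] at hxy
        apply Subtype.ext
        show Quotient.mk (connSetoid γ (hat α)) x = Quotient.mk (connSetoid γ (hat α)) y
        rcases hxy with hc | ⟨hx, _⟩
        · exact Quotient.sound hc
        · have hd : Quotient.mk (connSetoid γ (hat α)) x =
              Quotient.mk (connSetoid γ (hat α)) w0 :=
            Quotient.sound (touch_float'_to_D ha0 (fun z hz => h1 z (Quotient.sound hz)) hx)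
          exact absurd hd e1
    · rintro (_ | ⟨c, hc⟩)
      · exact ⟨⟨Quotient.mk (connSetoid γ (hat α)) w0, hD⟩, dif_pos rfl⟩
      · obtain ⟨x, hx⟩ := Quotient.exists_rep c
        have hfl' := float'_of_float hc x hx
        have hne : Quotient.mk (connSetoid γ (hat α)) x ≠
            Quotient.mk (connSetoid γ (hat α)) w0 := by
          intro he
          have hcw : conn γ (hat α) x w0 := Quotient.exact he
          -- then the coarse class of x contains a bottom vertex
          have htx : touches γ α t0 x := ⟨Sum.inl a0, ha0, hcw⟩
          have htb : touches γ α t0 (Sum.inr (Sum.inr b0) : W n) :=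
            ⟨Sum.inr b0, hb0, EqvGen.refl _⟩
          have hcb : conn γ α x (Sum.inr (Sum.inr b0)) :=
            (conn_iff_struct hOnly).mpr (Or.inr ⟨htx, htb⟩)
          have : isMid (Sum.inr (Sum.inr b0) : W n) :=
            hc _ ((Quotient.sound (Relation.EqvGen.symm _ _ hcb)).trans hx)
          exact not_isMid_bot b0 this
        refine ⟨⟨Quotient.mk (connSetoid γ (hat α)) x, hfl'⟩, ?_⟩
        simp only [H, dif_neg hne, Option.some.injEq]
        exact Subtype.ext (show Quotient.mk (connSetoid γ α) x = c from hx)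
  have := Nat.card_eq_of_bijective H hbij
  rw [show Nat.card (Option {c : Quotient (connSetoid γ α) //
      ∀ x : W n, Quotient.mk (connSetoid γ α) x = c → isMid x}) = Phi γ α + 1
    from Finite.card_option] at this
  exact this

end Rank1Count
section LeftKey

open Relation Sum

variable {n : ℕ}

lemma left_key (γ α : PM n) (hα : rnk α ≤ 1) :
    hat (pmul γ α) = hat (pmul γ (hat α)) ∧
    rnk (pmul γ α) ≤ 1 ∧
    (rnk (pmul γ α) : ℤ) + Phi γ (hat α) = Phi γ α + rnk (pmul γ (hat α)) + rnk α := by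
  by_cases hcross : ∃ u v, α.r u v ∧ side u ≠ side v
  · obtain ⟨u, v, huv, hsuv⟩ := hcross
    obtain ⟨⟨a0, ha0'⟩, ⟨b0, hb0'⟩⟩ := trans_class huv hsuv
    have ha0 : α.r (Sum.inl a0) u := Quotient.exact ha0'
    have hb0 : α.r (Sum.inr b0) u := Quotient.exact hb0'
    have hsub : Subsingleton {c : Quotient α //
        (∃ i : Fin n, Quotient.mk α (Sum.inl i) = c) ∧
        ∃ i : Fin n, Quotient.mk α (Sum.inr i) = c} :=
      Finite.card_le_one_iff_subsingleton.mp hα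
    have hOnly : ∀ p q, α.r p q → side p ≠ side q → α.r p u := by
      intro p q hpq hs
      have h1 := trans_class hpq hs
      have h2 := trans_class huv hsuv
      have he := hsub.elim ⟨Quotient.mk α p, h1⟩ ⟨Quotient.mk α u, h2⟩
      exact Quotient.exact (congrArg Subtype.val he)
    have hr1 : rnk α = 1 :=
      Nat.card_eq_one_iff_unique.mpr ⟨hsub, ⟨⟨Quotient.mk α u, trans_class huv hsuv⟩⟩⟩
    have hhat0 : rnk (pmul γ (hat α)) = 0 := rnk_pmul_zero (hat_no_cross α)
    have hhat_eq : hat (pmul γ α) = hat (pmul γ (hat α)) := hat_pmul_eq hOnly ha0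
    by_cases hTop : ∃ i : Fin n, conn γ (hat α) (Sum.inl i) (Sum.inr (Sum.inl a0))
    · have e1 := rnk_pmul_eq_one hOnly ha0 hb0 hTop
      have e2 := Phi_eq_of_top hOnly ha0 hTop
      refine ⟨hhat_eq, by rw [e1], ?_⟩
      rw [e1, e2, hhat0, hr1]
      push_cast
      ring
    · have e1 := rnk_pmul_eq_zero' hOnly ha0 hTop
      have e2 := Phi_succ_of_noTop hOnly ha0 hb0 hTop
      refine ⟨hhat_eq, by rw [e1]; omega, ?_⟩
      rw [e1, e2, hhat0, hr1]
      push_cast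
      ring
  · have hnc : ∀ u v, α.r u v → side u = side v := by
      intro u v huv
      by_contra hs
      exact hcross ⟨u, v, huv, hs⟩
    have hhat : hat α = α := hat_eq_self hnc
    have hr0 : rnk α = 0 := rnk_eq_zero_of_no_cross hnc
    rw [hhat, hr0]
    refine ⟨rfl, ?_, by push_cast; ring⟩
    rw [rnk_pmul_zero hnc]
    omega

end LeftKey
section Dual

open Relation Sum

variable {n : ℕ}

/-- Swap the primed and unprimed parts. -/
def dualV : V n → V n
  | Sum.inl i => Sum.inr i
  | Sum.inr i => Sum.inl i

/-- The dual partition. -/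
def dualS (α : PM n) : PM n :=
  ⟨fun x y => α.r (dualV x) (dualV y),
    ⟨fun _ => α.iseqv.refl _, fun h => α.iseqv.symm h, fun h h' => α.iseqv.trans h h'⟩⟩

/-- Swap the top and bottom rows. -/
def dualW : W n → W n
  | Sum.inl i => Sum.inr (Sum.inr i)
  | Sum.inr (Sum.inl i) => Sum.inr (Sum.inl i)
  | Sum.inr (Sum.inr i) => Sum.inl i

lemma dualV_dualV (u : V n) : dualV (dualV u) = u := by cases u <;> rfl

lemma dualW_dualW (x : W n) : dualW (dualW x) = x := by
  rcases x with i | (i | i) <;> rfl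

lemma dualW_topMid (u : V n) : dualW (topMid u) = midBot (dualV u) := by cases u <;> rfl

lemma dualW_midBot (u : V n) : dualW (midBot u) = topMid (dualV u) := by cases u <;> rfl

lemma dualW_topBot (u : V n) : dualW (topBot u) = topBot (dualV u) := by cases u <;> rfl

lemma side_dualV (u : V n) : side (dualV u) = !side u := by cases u <;> rfl

lemma isMid_dualW (x : W n) : isMid (dualW x) ↔ isMid x := by
  rcases x with i | (i | i) <;> simp [dualW, isMid]

lemma dualS_dualS (α : PM n) : dualS (dualS α) = α := by
  apply Setoid.ext
  intro x y
  show α.r (dualV (dualV x)) (dualV (dualV y)) ↔ α.r x y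
  rw [dualV_dualV, dualV_dualV]

lemma graphRel_dual {α β : PM n} {x y : W n} (h : graphRel α β x y) :
    graphRel (dualS β) (dualS α) (dualW x) (dualW y) := by
  rcases h with ⟨u, v, huv, rfl, rfl⟩ | ⟨u, v, huv, rfl, rfl⟩
  · refine Or.inr ⟨dualV u, dualV v, ?_, (dualW_topMid u).symm ▸ rfl, (dualW_topMid v).symm ▸ rfl⟩
    show α.r (dualV (dualV u)) (dualV (dualV v))
    rw [dualV_dualV, dualV_dualV]; exact huv
  · refine Or.inl ⟨dualV u, dualV v, ?_, (dualW_midBot u).symm ▸ rfl, (dualW_midBot v).symm ▸ rfl⟩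
    show β.r (dualV (dualV u)) (dualV (dualV v))
    rw [dualV_dualV, dualV_dualV]; exact huv

lemma eqvGen_map {A B : Type*} (f : A → B) {r : A → A → Prop} {s : B → B → Prop}
    (h : ∀ a b, r a b → s (f a) (f b)) {x y : A} (hr : Relation.EqvGen r x y) :
    Relation.EqvGen s (f x) (f y) := by
  induction hr with
  | rel a b hab => exact EqvGen.rel _ _ (h _ _ hab)
  | refl a => exact EqvGen.refl _
  | symm a b _ ih => exact EqvGen.symm _ _ ih
  | trans a b c _ _ ih1 ih2 => exact EqvGen.trans _ _ _ ih1 ih2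

lemma conn_dual {α β : PM n} {x y : W n} :
    conn (dualS β) (dualS α) (dualW x) (dualW y) ↔ conn α β x y := by
  constructor
  · intro h
    have h2 := eqvGen_map dualW (fun a b hab => graphRel_dual hab) h
    rw [dualS_dualS, dualS_dualS, dualW_dualW, dualW_dualW] at h2
    exact h2
  · exact eqvGen_map dualW (fun a b hab => graphRel_dual hab)

lemma pmul_dual (α β : PM n) : pmul α β = dualS (pmul (dualS β) (dualS α)) := by
  apply Setoid.ext
  intro x y
  show conn α β (topBot x) (topBot y) ↔
    conn (dualS β) (dualS α) (topBot (dualV x)) (topBot (dualV y))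
  rw [← dualW_topBot, ← dualW_topBot, conn_dual]

/-- The permutation of `V n` given by `dualV`. -/
def dualVPerm : Equiv.Perm (V n) := Function.Involutive.toPerm dualV dualV_dualV

/-- The permutation of `W n` given by `dualW`. -/
def dualWPerm : Equiv.Perm (W n) := Function.Involutive.toPerm dualW dualW_dualW

lemma card_subtype_quotient_congr {A B : Type*} {sa : Setoid A} {sb : Setoid B}
    (e : A ≃ B) (he : ∀ a b, sa.r a b ↔ sb.r (e a) (e b))
    (P : Quotient sa → Prop) (Q : Quotient sb → Prop)
    (hPQ : ∀ a : A, P (Quotient.mk sa a) ↔ Q (Quotient.mk sb (e a))) :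
    Nat.card {c : Quotient sa // P c} = Nat.card {c : Quotient sb // Q c} := by
  refine Nat.card_congr (Equiv.subtypeEquiv (Quotient.congr e he) fun c => ?_)
  obtain ⟨a, rfl⟩ := Quotient.exists_rep c
  exact hPQ a

lemma rnk_dual (α : PM n) : rnk (dualS α) = rnk α := by
  symm
  refine card_subtype_quotient_congr dualVPerm
    (fun a b => by
      show α.r a b ↔ α.r (dualV (dualV a)) (dualV (dualV b))
      rw [dualV_dualV, dualV_dualV]) _ _ (fun a => ?_)
  have mkiff : ∀ x y : V n, (Quotient.mk α x = Quotient.mk α y) ↔ α.r x y :=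
    fun x y => ⟨fun h => Quotient.exact h, fun h => Quotient.sound h⟩
  have mkiff' : ∀ x y : V n,
      (Quotient.mk (dualS α) x = Quotient.mk (dualS α) y) ↔ α.r (dualV x) (dualV y) :=
    fun x y => ⟨fun h => ((Quotient.exact h : (dualS α).r x y) : α.r (dualV x) (dualV y)),
      fun h => Quotient.sound (h : (dualS α).r x y)⟩
  show ((∃ i : Fin n, Quotient.mk α (Sum.inl i) = Quotient.mk α a) ∧
      ∃ i : Fin n, Quotient.mk α (Sum.inr i) = Quotient.mk α a) ↔
    ((∃ i : Fin n, Quotient.mk (dualS α) (Sum.inl i) = Quotient.mk (dualS α) (dualV a)) ∧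
      ∃ i : Fin n, Quotient.mk (dualS α) (Sum.inr i) = Quotient.mk (dualS α) (dualV a))
  simp only [mkiff, mkiff', dualV_dualV,
    show ∀ i : Fin n, dualV (Sum.inl i) = Sum.inr i from fun _ => rfl,
    show ∀ i : Fin n, dualV (Sum.inr i) = Sum.inl i from fun _ => rfl]
  exact and_comm

lemma Phi_dual (α β : PM n) : Phi (dualS β) (dualS α) = Phi α β := by
  symm
  refine card_subtype_quotient_congr dualWPerm
    (fun a b => by
      show conn α β a b ↔ conn (dualS β) (dualS α) (dualW a) (dualW b)
      exact conn_dual.symm) _ _ (fun a => ?_)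
  show (∀ x : W n, Quotient.mk (connSetoid α β) x = Quotient.mk (connSetoid α β) a → isMid x) ↔
    (∀ x : W n, Quotient.mk (connSetoid (dualS β) (dualS α)) x =
      Quotient.mk (connSetoid (dualS β) (dualS α)) (dualW a) → isMid x)
  constructor
  · intro h x hx
    have hc : conn (dualS β) (dualS α) x (dualW a) := Quotient.exact hx
    rw [← dualW_dualW x] at hc
    have hc2 : conn α β (dualW x) a := conn_dual.mp hc
    rw [← isMid_dualW]
    exact h (dualW x) (Quotient.sound hc2)
  · intro h x hx
    have hc : conn α β x a := Quotient.exact hx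
    have hc2 : conn (dualS β) (dualS α) (dualW x) (dualW a) := conn_dual.mpr hc
    rw [← isMid_dualW]
    exact h (dualW x) (Quotient.sound hc2)

lemma hat_dual (α : PM n) : hat (dualS α) = dualS (hat α) := by
  apply Setoid.ext
  intro x y
  show α.r (dualV x) (dualV y) ∧ side x = side y ↔
    α.r (dualV x) (dualV y) ∧ side (dualV x) = side (dualV y)
  rw [side_dualV, side_dualV]
  simp

lemma right_key (γ α : PM n) (hα : rnk α ≤ 1) :
    hat (pmul α γ) = hat (pmul (hat α) γ) ∧
    rnk (pmul α γ) ≤ 1 ∧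
    (rnk (pmul α γ) : ℤ) + Phi (hat α) γ = Phi α γ + rnk (pmul (hat α) γ) + rnk α := by
  have hd : rnk (dualS α) ≤ 1 := by rw [rnk_dual]; exact hα
  obtain ⟨h1, h2, h3⟩ := left_key (dualS γ) (dualS α) hd
  have ep : pmul α γ = dualS (pmul (dualS γ) (dualS α)) := pmul_dual α γ
  have ep' : pmul (hat α) γ = dualS (pmul (dualS γ) (hat (dualS α))) := by
    rw [hat_dual]
    exact pmul_dual (hat α) γ
  refine ⟨?_, ?_, ?_⟩
  · rw [ep, ep', hat_dual, hat_dual, h1]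
  · rw [ep, rnk_dual]
    exact h2
  · rw [ep, ep', rnk_dual, rnk_dual,
      show Phi (hat α) γ = Phi (dualS γ) (hat (dualS α)) by rw [hat_dual, Phi_dual],
      show Phi α γ = Phi (dualS γ) (dualS α) by rw [Phi_dual]]
    rw [rnk_dual α] at h3
    exact h3

end Dual

/-- The relation consisting of the diagonal together with all pairs
`((i,α),(j,β))` with `α, β ∈ I_1`, `α̂ = β̂` and `rank α − rank β = i − j` (as integers)
is a congruence on `P_n^Φ`. -/
theorem weird_congruence (n : ℕ) (hn : 1 ≤ n) :
    IsCongruence (tmul (n := n)) (fun a b =>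
      a = b ∨
      (rnk a.2 ≤ 1 ∧ rnk b.2 ≤ 1 ∧ hat a.2 = hat b.2 ∧
        (rnk a.2 : ℤ) - (rnk b.2 : ℤ) = (a.1 : ℤ) - (b.1 : ℤ))) := by
  constructor
  · refine ⟨fun x => Or.inl rfl, ?_, ?_⟩
    · rintro x y (rfl | ⟨h1, h2, h3, h4⟩)
      · exact Or.inl rfl
      · exact Or.inr ⟨h2, h1, h3.symm, by omega⟩
    · rintro x y z (rfl | ⟨h1, h2, h3, h4⟩) hyz
      · exact hyz
      · rcases hyz with rfl | ⟨g1, g2, g3, g4⟩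
        · exact Or.inr ⟨h1, h2, h3, h4⟩
        · exact Or.inr ⟨h1, g2, h3.trans g3, by omega⟩
  · rintro x y a (rfl | ⟨h1, h2, h3, h4⟩)
    · exact ⟨Or.inl rfl, Or.inl rfl⟩
    · obtain ⟨la1, la2, la3⟩ := left_key a.2 x.2 h1
      obtain ⟨lb1, lb2, lb3⟩ := left_key a.2 y.2 h2
      obtain ⟨ra1, ra2, ra3⟩ := right_key a.2 x.2 h1
      obtain ⟨rb1, rb2, rb3⟩ := right_key a.2 y.2 h2
      rw [h3] at la3 ra3
      constructor
      · right
        refine ⟨la2, lb2, ?_, ?_⟩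
        · show hat (pmul a.2 x.2) = hat (pmul a.2 y.2)
          rw [la1, lb1, h3]
        · show (rnk (pmul a.2 x.2) : ℤ) - (rnk (pmul a.2 y.2) : ℤ) =
            ((a.1 + x.1 + Phi a.2 x.2 : ℕ) : ℤ) - ((a.1 + y.1 + Phi a.2 y.2 : ℕ) : ℤ)
          push_cast
          omega
      · right
        refine ⟨ra2, rb2, ?_, ?_⟩
        · show hat (pmul x.2 a.2) = hat (pmul y.2 a.2)
          rw [ra1, rb1, h3]
        · show (rnk (pmul x.2 a.2) : ℤ) - (rnk (pmul y.2 a.2) : ℤ) =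
            ((x.1 + a.1 + Phi x.2 a.2 : ℕ) : ℤ) - ((y.1 + a.1 + Phi y.2 a.2 : ℕ) : ℤ)
          push_cast
          omega


end TPM
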